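/- There exists a constant C > 0 such that for every integer m ≥ 0, setting n = 5·2^m, every set Q of subsets of X_n satisfying c_Q(μ) = Opt(μ) for all probability distributions μ on X_n has cardinality at least 1.25^n / (C·√n); that is, u_Opt(n,0) ≥ 1.25^n / (C·√n) for all n of the form 5·2^m. -/

import Mathlib

namespace TQ

/-- A decision tree: internal nodes are labeled by questions (subsets of `α`,
with the two children corresponding to Yes/No), leaves by elements of `α`. -/
inductive DTree (α : Type) where
  | leaf (x : α) : DTree α
  | node (q : Finset α) (yes no : DTree α) : DTree α

namespace DTree

variable {α : Type} [DecidableEq α]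

/-- The list of leaf labels of a decision tree. -/
def leaves : DTree α → List α
  | .leaf x => [x]
  | .node _ t f => leaves t ++ leaves f

/-- The set of questions appearing at internal nodes. -/
def questions : DTree α → Set (Finset α)
  | .leaf _ => ∅
  | .node q t f => insert q (questions t ∪ questions f)

/-- Follow the path of `x` (Yes-edge iff `x` belongs to the question);
returns `some d` iff the path ends at a leaf labeled `x`, at depth `d`. -/
def find? : DTree α → α → Option ℕ
  | .leaf y, x => if y = x then some 0 else none
  | .node q t f, x => (if x ∈ q then find? t x else find? f x).map (· + 1)

/-- The depth of the leaf labeled `x` (junk value `0` if the path of `x`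
does not end at a leaf labeled `x`). -/
def depth (T : DTree α) (x : α) : ℕ := (T.find? x).getD 0

end DTree

variable {α : Type} [Fintype α] [DecidableEq α]

/-- `μ` is a probability distribution on `α`. -/
def IsDistribution (μ : α → ℝ) : Prop := (∀ x, 0 ≤ μ x) ∧ ∑ x, μ x = 1

/-- `T` is valid for `μ`: its leaves are distinct, the set of leaf labels is the
support of `μ`, and for every `x` in the support the path of `x` ends at the
leaf labeled `x`. -/
structure IsValid (T : DTree α) (μ : α → ℝ) : Prop where
  nodup : T.leaves.Nodup
  mem_leaves : ∀ x, x ∈ T.leaves ↔ μ x ≠ 0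
  finds : ∀ x, μ x ≠ 0 → T.find? x = some (T.depth x)

/-- The cost of `T` on `μ`: the average depth `∑ x, μ(x) · T(x)`. -/
noncomputable def cost (T : DTree α) (μ : α → ℝ) : ℝ := ∑ x, μ x * (T.depth x : ℝ)

/-- All questions of `T` belong to `Q`. -/
def UsesQuestions (T : DTree α) (Q : Set (Finset α)) : Prop := T.questions ⊆ Q

/-- `Opt(μ)`: the optimal cost over all decision trees valid for `μ`. -/
noncomputable def OptCost (μ : α → ℝ) : ℝ :=
  sInf { c | ∃ T : DTree α, IsValid T μ ∧ c = cost T μ }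

/-- `c_Q(μ)`: the optimal cost over decision trees valid for `μ`
using only questions from `Q`. -/
noncomputable def cQ (Q : Set (Finset α)) (μ : α → ℝ) : ℝ :=
  sInf { c | ∃ T : DTree α, IsValid T μ ∧ UsesQuestions T Q ∧ c = cost T μ }

/-- The base-2 (Shannon) entropy of `μ`. (Note `Real.logb 2 0 = 0`.) -/
noncomputable def entropy (μ : α → ℝ) : ℝ := ∑ x, -(μ x * Real.logb 2 (μ x))

/-- `Q` achieves prolixity `r`: for every distribution there is a valid tree using
only questions from `Q` of cost at most `Opt(μ) + r`. -/
def AchievesProlixity {n : ℕ} (Q : Finset (Finset (Fin n))) (r : ℝ) : Prop :=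
  ∀ μ : Fin n → ℝ, IsDistribution μ →
    ∃ T : DTree (Fin n), IsValid T μ ∧ UsesQuestions T ↑Q ∧ cost T μ ≤ OptCost μ + r

/-- `Q` achieves redundancy `r`: for every distribution there is a valid tree using
only questions from `Q` of cost at most `H(μ) + r`. -/
def AchievesRedundancy {n : ℕ} (Q : Finset (Finset (Fin n))) (r : ℝ) : Prop :=
  ∀ μ : Fin n → ℝ, IsDistribution μ →
    ∃ T : DTree (Fin n), IsValid T μ ∧ UsesQuestions T ↑Q ∧ cost T μ ≤ entropy μ + r

/-- `u_Opt(n,r)`: the minimum cardinality of a set of questions achieving prolixity `r`. -/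
noncomputable def uOpt (n : ℕ) (r : ℝ) : ℕ :=
  sInf { k | ∃ Q : Finset (Finset (Fin n)), Q.card = k ∧ AchievesProlixity Q r }

/-- `u_H(n,r)`: the minimum cardinality of a set of questions achieving redundancy `r`. -/
noncomputable def uH (n : ℕ) (r : ℝ) : ℕ :=
  sInf { k | ∃ Q : Finset (Finset (Fin n)), Q.card = k ∧ AchievesRedundancy Q r }

end TQ

namespace TQ
namespace DTree

set_option linter.unusedSectionVars false

variable {α : Type} [DecidableEq α]

theorem mem_leaves_of_find? {T : DTree α} {x : α} {k : ℕ} (h : T.find? x = some k) :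
    x ∈ T.leaves := by
  induction T generalizing k with
  | leaf y =>
      simp only [find?] at h
      split at h
      · next heq => simp [leaves, heq]
      · simp at h
  | node q t f iht ihf =>
      simp only [find?] at h
      rcases Option.map_eq_some_iff.mp h with ⟨a, ha, _⟩
      by_cases hq : x ∈ q
      · rw [if_pos hq] at ha
        exact List.mem_append.mpr (Or.inl (iht ha))
      · rw [if_neg hq] at ha
        exact List.mem_append.mpr (Or.inr (ihf ha))

/-- weight of a find?-result -/
noncomputable def wgt : Option ℕ → ℝ
  | none => 0
  | some d => (2 : ℝ)⁻¹ ^ d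

theorem wgt_nonneg (o : Option ℕ) : 0 ≤ wgt o := by
  cases o with
  | none => simp [wgt]
  | some d => simp only [wgt]; positivity

theorem wgt_map_succ (o : Option ℕ) : wgt (o.map (· + 1)) = wgt o / 2 := by
  cases o with
  | none => simp [wgt]
  | some d => simp [wgt, pow_succ]; ring

theorem kraft [Fintype α] (T : DTree α) : ∑ x, wgt (T.find? x) ≤ 1 := by
  induction T with
  | leaf y =>
      have h : ∀ x, wgt (find? (DTree.leaf y) x) = if y = x then 1 else 0 := by
        intro x
        simp only [find?]
        split <;> simp [wgt]
      rw [Finset.sum_congr rfl fun x _ => h x]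
      rw [Finset.sum_ite_eq Finset.univ y (fun _ => (1:ℝ))]
      simp
  | node q t f iht ihf =>
      have h : ∀ x, wgt (find? (DTree.node q t f) x)
          = (if x ∈ q then wgt (t.find? x) else wgt (f.find? x)) / 2 := by
        intro x
        simp only [find?]
        by_cases hq : x ∈ q
        · rw [if_pos hq, if_pos hq, wgt_map_succ]
        · rw [if_neg hq, if_neg hq, wgt_map_succ]
      calc ∑ x, wgt (find? (DTree.node q t f) x)
          ≤ ∑ x, (wgt (t.find? x) / 2 + wgt (f.find? x) / 2) := by
            refine Finset.sum_le_sum fun x _ => ?_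
            rw [h x]
            by_cases hq : x ∈ q
            · rw [if_pos hq]
              have := wgt_nonneg (f.find? x); linarith
            · rw [if_neg hq]
              have := wgt_nonneg (t.find? x); linarith
        _ = (∑ x, wgt (t.find? x)) / 2 + (∑ x, wgt (f.find? x)) / 2 := by
            rw [Finset.sum_add_distrib, Finset.sum_div, Finset.sum_div]
        _ ≤ 1 / 2 + 1 / 2 := by gcongr
        _ = 1 := by norm_num

section Cat

variable [Inhabited α]

instance : Inhabited (DTree α) := ⟨.leaf default⟩

def cat : List α → DTree α
  | [] => .leaf default
  | [x] => .leaf x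
  | x :: y :: rest => .node {x} (.leaf x) (cat (y :: rest))

theorem cat_leaves : ∀ (l : List α), l ≠ [] → (cat l).leaves = l
  | [], h => absurd rfl h
  | [x], _ => by simp [cat, leaves]
  | x :: y :: rest, _ => by
      rw [cat, leaves, cat_leaves (y :: rest) (by simp), leaves]
      simp

theorem cat_find? : ∀ (l : List α), l.Nodup → ∀ x ∈ l,
    (cat l).find? x = some (if l.idxOf x + 1 = l.length then l.idxOf x
      else l.idxOf x + 1)
  | [], _, x, hx => absurd hx (by simp)
  | [y], _, x, hx => by
      have hxy : x = y := by simpa using hx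
      subst hxy
      simp [cat, find?]
  | y :: z :: rest, hnd, x, hx => by
      by_cases hxy : x = y
      · subst hxy
        have h0 : List.idxOf x (x :: z :: rest) = 0 := List.idxOf_cons_self
        rw [cat, find?, if_pos (Finset.mem_singleton_self x)]
        rw [show find? (DTree.leaf x) x = some 0 by simp [find?]]
        rw [h0]
        have hlen : (x :: z :: rest).length = rest.length + 2 := by simp
        rw [if_neg (by omega)]
        rfl
      · have hxtail : x ∈ z :: rest := by
          rcases List.mem_cons.mp hx with h | h
          · exact absurd h hxy
          · exact h
        have ih := cat_find? (z :: rest) hnd.of_cons x hxtail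
        rw [cat, find?, if_neg (fun h => hxy (Finset.mem_singleton.mp h)), ih]
        have hidx : List.idxOf x (y :: z :: rest) = List.idxOf x (z :: rest) + 1 := by
          rw [List.idxOf_cons_ne _ (fun h => hxy h.symm)]
        rw [hidx, Option.map_some]
        have hlen : (y :: z :: rest).length = (z :: rest).length + 1 := by simp
        rw [hlen]
        congr 1
        split_ifs with h1 h2 h3 <;> omega

/-- Combine a list of `2^k` trees into a balanced tree. -/
def combine : ℕ → List (DTree α) → DTree α
  | 0, l => l.headI
  | k+1, l => .node ((l.take (2^k)).flatMap leaves).toFinset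
      (combine k (l.take (2^k))) (combine k (l.drop (2^k)))

theorem combine_leaves : ∀ (k : ℕ) (l : List (DTree α)), l.length = 2 ^ k →
    (combine k l).leaves = l.flatMap leaves
  | 0, l, hl => by
      rcases List.length_eq_one_iff.mp (by simpa using hl) with ⟨t, rfl⟩
      simp [combine]
  | k+1, l, hl => by
      have h1 : (l.take (2^k)).length = 2 ^ k := by
        rw [List.length_take, hl]
        have : 2 ^ k ≤ 2 ^ (k+1) := Nat.pow_le_pow_right (by norm_num) (by omega)
        omega
      have h2 : (l.drop (2^k)).length = 2 ^ k := by
        rw [List.length_drop, hl, pow_succ]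
        omega
      rw [combine, leaves, combine_leaves k _ h1, combine_leaves k _ h2,
        ← List.flatMap_append, List.take_append_drop]

theorem combine_find? : ∀ (k : ℕ) (l : List (DTree α)),
    l.length = 2 ^ k → (l.flatMap leaves).Nodup →
    ∀ (t : DTree α), t ∈ l → ∀ (x : α) (v : ℕ), t.find? x = some v →
    (combine k l).find? x = some (k + v)
  | 0, l, hl, _, t, ht, x, v, hv => by
      rcases List.length_eq_one_iff.mp (by simpa using hl) with ⟨t', rfl⟩
      have : t = t' := by simpa using ht
      subst this
      simpa [combine] using hv
  | k+1, l, hl, hnd, t, ht, x, v, hv => by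
      have h1 : (l.take (2^k)).length = 2 ^ k := by
        rw [List.length_take, hl]
        have : 2 ^ k ≤ 2 ^ (k+1) := Nat.pow_le_pow_right (by norm_num) (by omega)
        omega
      have h2 : (l.drop (2^k)).length = 2 ^ k := by
        rw [List.length_drop, hl, pow_succ]
        omega
      have hsplit : l.take (2^k) ++ l.drop (2^k) = l := List.take_append_drop _ _
      have hndapp : ((l.take (2^k)).flatMap leaves ++ (l.drop (2^k)).flatMap leaves).Nodup := by
        rw [← List.flatMap_append, hsplit]; exact hnd
      have hnd1 : ((l.take (2^k)).flatMap leaves).Nodup := hndapp.of_append_left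
      have hnd2 : ((l.drop (2^k)).flatMap leaves).Nodup := hndapp.of_append_right
      have hdisj : ∀ y, y ∈ (l.take (2^k)).flatMap leaves →
          y ∉ (l.drop (2^k)).flatMap leaves := fun y hy hy2 =>
        (List.nodup_append.mp hndapp).2.2 y hy y hy2 rfl
      have hxt : x ∈ t.leaves := mem_leaves_of_find? hv
      have htl : t ∈ l.take (2^k) ∨ t ∈ l.drop (2^k) := by
        rw [← hsplit] at ht
        exact List.mem_append.mp ht
      rcases htl with h | h
      · have hxin : x ∈ (l.take (2^k)).flatMap leaves :=
          List.mem_flatMap.mpr ⟨t, h, hxt⟩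
        rw [combine, find?, if_pos (List.mem_toFinset.mpr hxin),
          combine_find? k _ h1 hnd1 t h x v hv, Option.map_some]
        congr 1
        omega
      · have hxin : x ∈ (l.drop (2^k)).flatMap leaves :=
          List.mem_flatMap.mpr ⟨t, h, hxt⟩
        have hxout : x ∉ ((l.take (2^k)).flatMap leaves).toFinset := by
          rw [List.mem_toFinset]
          exact fun hc => hdisj x hc hxin
        rw [combine, find?, if_neg hxout,
          combine_find? k _ h2 hnd2 t h x v hv, Option.map_some]
        congr 1
        omega

end Cat

end DTree

/-- Shannon equality: forced depths -/
theorem depth_forced {α : Type} [Fintype α] (d D : α → ℕ)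
    (hd : ∑ x, ((2:ℝ)⁻¹) ^ d x = 1)
    (hK : ∑ x, ((2:ℝ)⁻¹) ^ D x ≤ 1)
    (hcost : ∑ x, ((2:ℝ)⁻¹) ^ d x * (D x : ℝ) ≤ ∑ x, ((2:ℝ)⁻¹) ^ d x * (d x : ℝ)) :
    ∀ x, D x = d x := by
  set L := Real.log 2 with hLdef
  have hL : 0 < L := Real.log_pos (by norm_num)
  have hhalf : ∀ k : ℕ, ((2:ℝ)⁻¹) ^ k = Real.exp (-(k * L)) := by
    intro k
    rw [← Real.exp_log (show (0:ℝ) < (2:ℝ)⁻¹ by norm_num), ← Real.exp_nat_mul,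
      Real.log_inv, hLdef]
    ring_nf
  have key : ∀ x : α, ((2:ℝ)⁻¹) ^ D x
      = ((2:ℝ)⁻¹) ^ d x * Real.exp (((d x : ℝ) - D x) * L) := by
    intro x
    rw [hhalf (D x), hhalf (d x), ← Real.exp_add]
    congr 1
    ring
  set F : α → ℝ := fun x =>
    ((2:ℝ)⁻¹) ^ d x * (Real.exp (((d x : ℝ) - D x) * L) - 1 - ((d x : ℝ) - D x) * L)
    with hFdef
  have hF0 : ∀ x, 0 ≤ F x := by
    intro x
    apply mul_nonneg (by positivity)
    have := Real.add_one_le_exp (((d x : ℝ) - D x) * L)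
    linarith
  have hsumF : ∑ x, F x ≤ 0 := by
    have e1 : ∀ x : α, F x = (((2:ℝ)⁻¹) ^ D x - ((2:ℝ)⁻¹) ^ d x)
        - L * ((((2:ℝ)⁻¹) ^ d x * (d x : ℝ)) - (((2:ℝ)⁻¹) ^ d x * (D x : ℝ))) := by
      intro x
      rw [hFdef]
      simp only
      rw [key x]
      ring
    have expand : ∑ x, F x
        = ((∑ x, ((2:ℝ)⁻¹) ^ D x) - (∑ x, ((2:ℝ)⁻¹) ^ d x))
          - L * ((∑ x, ((2:ℝ)⁻¹) ^ d x * (d x : ℝ))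
                 - (∑ x, ((2:ℝ)⁻¹) ^ d x * (D x : ℝ))) := by
      rw [Finset.sum_congr rfl fun x _ => e1 x, Finset.sum_sub_distrib,
        Finset.sum_sub_distrib, ← Finset.mul_sum, Finset.sum_sub_distrib]
    rw [expand, hd]
    have h2 : 0 ≤ L * ((∑ x, ((2:ℝ)⁻¹) ^ d x * (d x : ℝ))
                 - (∑ x, ((2:ℝ)⁻¹) ^ d x * (D x : ℝ))) := by
      apply mul_nonneg hL.le
      linarith
    linarith
  have hall : ∀ x ∈ Finset.univ, F x = 0 := by
    rw [← Finset.sum_eq_zero_iff_of_nonneg (fun x _ => hF0 x)]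
    have := Finset.sum_nonneg (fun x (_ : x ∈ Finset.univ) => hF0 x)
    linarith
  intro x
  have hx := hall x (Finset.mem_univ x)
  rw [hFdef] at hx
  simp only at hx
  have hpos : (0:ℝ) < ((2:ℝ)⁻¹) ^ d x := by positivity
  have hzero : Real.exp (((d x : ℝ) - D x) * L) - 1 - ((d x : ℝ) - D x) * L = 0 := by
    rcases mul_eq_zero.mp hx with h | h
    · exact absurd h (ne_of_gt hpos)
    · exact h
  by_contra hne
  have hy : ((d x : ℝ) - D x) * L ≠ 0 := by
    refine mul_ne_zero (fun h => hne ?_) (ne_of_gt hL)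
    have : (D x : ℝ) = (d x : ℝ) := by linarith
    exact_mod_cast this
  have := Real.add_one_lt_exp hy
  linarith

end TQ
namespace TQ
open DTree

/-! ### The hard family of distributions -/

def catD (len i : ℕ) : ℕ := if i + 1 = len then i else i + 1

theorem catD_le {len i : ℕ} (h : i < len) : catD len i ≤ len - 1 := by
  unfold catD; split_ifs <;> omega

theorem sum_halfpow_catD (K : ℕ) :
    ∑ i ∈ Finset.range (K+1), ((2:ℝ)⁻¹) ^ catD (K+1) i = 1 := by
  have aux : ∀ M : ℕ, ∑ i ∈ Finset.range M, ((2:ℝ)⁻¹) ^ (i+1) = 1 - ((2:ℝ)⁻¹)^M := by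
    intro M; induction M with
    | zero => simp
    | succ M ih => rw [Finset.sum_range_succ, ih, pow_succ]; ring
  rw [Finset.sum_range_succ]
  have h1 : ∀ i ∈ Finset.range K, ((2:ℝ)⁻¹) ^ catD (K+1) i = ((2:ℝ)⁻¹)^(i+1) := by
    intro i hi; rw [Finset.mem_range] at hi; unfold catD; rw [if_neg (by omega)]
  rw [Finset.sum_congr rfl h1, aux K]
  unfold catD
  rw [if_pos rfl]
  ring

theorem sum_pow_catD (K : ℕ) :
    ∑ i ∈ Finset.range (K+1), 2 ^ (K - catD (K+1) i) = 2 ^ K := by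
  have aux : ∀ M : ℕ, ∑ i ∈ Finset.range M, 2 ^ (M - 1 - i) = 2 ^ M - 1 := by
    intro M; induction M with
    | zero => simp
    | succ M ih =>
        rw [Finset.sum_range_succ']
        have h1 : ∀ i ∈ Finset.range M, 2 ^ (M + 1 - 1 - (i+1)) = 2 ^ (M - 1 - i) := by
          intro i hi; congr 1; omega
        rw [Finset.sum_congr rfl h1, ih]
        have : 2 ^ (M + 1 - 1 - 0) = 2 ^ M := by congr 1
        rw [this]
        have h2 : 1 ≤ 2 ^ M := Nat.one_le_two_pow
        have h3 : (2:ℕ) ^ (M+1) = 2 * 2 ^ M := by rw [pow_succ]; ring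
        omega
  rw [Finset.sum_range_succ]
  have h1 : ∀ i ∈ Finset.range K, 2 ^ (K - catD (K+1) i) = 2 ^ (K - 1 - i) := by
    intro i hi; rw [Finset.mem_range] at hi
    unfold catD; rw [if_neg (by omega)]
    congr 1; omega
  rw [Finset.sum_congr rfl h1, aux K]
  unfold catD
  rw [if_pos rfl]
  have h2 : 1 ≤ 2 ^ K := Nat.one_le_two_pow
  simp
  omega

theorem sum_sort_indexOf {n : ℕ} {β : Type} [AddCommMonoid β] (s : Finset (Fin n)) (F : ℕ → β) :
    ∑ x ∈ s, F ((s.sort (· ≤ ·)).idxOf x)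
      = ∑ i ∈ Finset.range (s.sort (· ≤ ·)).length, F i := by
  apply Finset.sum_bij (fun x _ => (s.sort (· ≤ ·)).idxOf x)
  · intro a ha
    rw [Finset.mem_range]
    exact List.idxOf_lt_length_iff.mpr ((Finset.mem_sort _).mpr ha)
  · intro a ha b hb hab
    exact (List.idxOf_inj ((Finset.mem_sort _).mpr ha)).mp hab
  · intro i hi
    rw [Finset.mem_range] at hi
    refine ⟨(s.sort (· ≤ ·)).get ⟨i, hi⟩, (Finset.mem_sort _).mp (List.get_mem _ _), ?_⟩
    rw [List.get_eq_getElem]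
    have hnd : (s.sort (· ≤ ·)).Nodup := Finset.sort_nodup _ _
    exact hnd.idxOf_getElem i hi
  · intro a ha; rfl

section Profile

variable (m : ℕ) (H : Finset (Fin (5 * 2 ^ m)))

/-- sorted list of the complement of the heavy set -/
def cL : List (Fin (5 * 2 ^ m)) := ((Finset.univ \ H).sort (· ≤ ·))

/-- sorted list of the heavy set -/
def hL : List (Fin (5 * 2 ^ m)) := (H.sort (· ≤ ·))

/-- the depth profile -/
def dp (x : Fin (5 * 2 ^ m)) : ℕ :=
  if x ∈ H then m + 1 else m + 1 + catD (cL m H).length ((cL m H).idxOf x)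

/-- the hard distribution -/
noncomputable def μp (x : Fin (5 * 2 ^ m)) : ℝ := ((2:ℝ)⁻¹) ^ dp m H x

variable {hH : H.card = 2 * 2 ^ m - 1}

theorem cL_length (hH : H.card = 2 * 2 ^ m - 1) : (cL m H).length = 3 * 2 ^ m + 1 := by
  rw [cL, Finset.length_sort, Finset.card_sdiff_of_subset (Finset.subset_univ H), hH]
  have h1 : 1 ≤ 2 ^ m := Nat.one_le_two_pow
  simp [Finset.card_univ]
  omega

theorem mem_cL {x : Fin (5 * 2 ^ m)} : x ∈ cL m H ↔ x ∉ H := by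
  rw [cL, Finset.mem_sort, Finset.mem_sdiff]
  simp

theorem sum_μp (hH : H.card = 2 * 2 ^ m - 1) : ∑ x, μp m H x = 1 := by
  have hsplit := Finset.sum_sdiff (f := μp m H) (Finset.subset_univ H)
  have hH2 : ∑ x ∈ H, μp m H x = ((2 * 2 ^ m - 1 : ℕ) : ℝ) * ((2:ℝ)⁻¹) ^ (m+1) := by
    rw [Finset.sum_congr rfl (fun x hx => by rw [μp, dp, if_pos hx]),
      Finset.sum_const, hH, nsmul_eq_mul]
  have hC2 : ∑ x ∈ Finset.univ \ H, μp m H x = ((2:ℝ)⁻¹) ^ (m+1) := by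
    have e1 : ∀ x ∈ Finset.univ \ H, μp m H x
        = ((2:ℝ)⁻¹) ^ (m+1) * ((2:ℝ)⁻¹) ^ (catD (cL m H).length ((cL m H).idxOf x)) := by
      intro x hx
      rw [Finset.mem_sdiff] at hx
      rw [μp, dp, if_neg hx.2, pow_add]
    rw [Finset.sum_congr rfl e1, ← Finset.mul_sum]
    have := sum_sort_indexOf (Finset.univ \ H)
      (fun i => ((2:ℝ)⁻¹) ^ (catD (cL m H).length i))
    rw [cL] at *
    rw [this]
    rw [show ((Finset.univ \ H).sort (· ≤ ·)).length = 3 * 2 ^ m + 1 from cL_length m H hH]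
    have hgoal := sum_halfpow_catD (3 * 2 ^ m)
    rw [hgoal, mul_one]
  rw [← hsplit, hH2, hC2]
  have h1 : 1 ≤ 2 ^ m := Nat.one_le_two_pow
  have hcast : ((2 * 2 ^ m - 1 : ℕ) : ℝ) = 2 * 2 ^ m - 1 := by
    push_cast [Nat.cast_sub (by omega : 1 ≤ 2 * 2 ^ m)]
    ring
  rw [hcast]
  have hpow : ((2:ℝ)⁻¹) ^ (m+1) = (2 * (2:ℝ)^m)⁻¹ := by
    rw [pow_succ, mul_inv, inv_pow]
    ring
  rw [hpow]
  have hne : (2 * (2:ℝ)^m) ≠ 0 := by positivity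
  field_simp
  ring

theorem μp_pos (x : Fin (5 * 2 ^ m)) : 0 < μp m H x := by
  rw [μp]; positivity

theorem μp_dist (hH : H.card = 2 * 2 ^ m - 1) : IsDistribution (μp m H) :=
  ⟨fun x => (μp_pos m H x).le, sum_μp m H hH⟩

end Profile

end TQ
namespace TQ
open DTree

section Tree0

variable (m : ℕ) (H : Finset (Fin (5 * 2 ^ m)))

/-- the explicit optimal tree for `μp` -/
def T0 : DTree (Fin (5 * 2 ^ m)) :=
  combine (m + 1) (((hL m H).map DTree.leaf) ++ [cat (cL m H)])

theorem cL_nodup : (cL m H).Nodup := by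
  rw [cL]; exact Finset.sort_nodup _ _

theorem T0_list_length (hH : H.card = 2 * 2 ^ m - 1) : (((hL m H).map DTree.leaf) ++ [cat (cL m H)]).length = 2 ^ (m + 1) := by
  rw [List.length_append, List.length_map, hL, Finset.length_sort, hH]
  have h1 : 1 ≤ 2 ^ m := Nat.one_le_two_pow
  simp [pow_succ]
  omega

theorem T0_flat (hH : H.card = 2 * 2 ^ m - 1) :
    ((((hL m H).map DTree.leaf) ++ [cat (cL m H)]).flatMap DTree.leaves)
      = hL m H ++ cL m H := by
  rw [List.flatMap_append]
  congr 1
  · rw [List.flatMap_map]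
    have : ∀ (l : List (Fin (5 * 2 ^ m))), l.flatMap (fun x => DTree.leaves (DTree.leaf x)) = l := by
      intro l; induction l with
      | nil => rfl
      | cons a t ih => simp [DTree.leaves, ih]
    exact this _
  · have hne : cL m H ≠ [] := by
      have := cL_length m H hH
      intro h; rw [h] at this; simp at this
    simp [cat_leaves _ hne]

theorem T0_flat_nodup (hH : H.card = 2 * 2 ^ m - 1) :
    ((((hL m H).map DTree.leaf) ++ [cat (cL m H)]).flatMap DTree.leaves).Nodup := by
  rw [T0_flat m H hH]
  rw [List.nodup_append]
  refine ⟨Finset.sort_nodup _ _, Finset.sort_nodup _ _, ?_⟩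
  intro a ha b hb hab
  subst hab
  rw [hL, Finset.mem_sort] at ha
  rw [mem_cL] at hb
  exact hb ha

theorem T0_leaves (hH : H.card = 2 * 2 ^ m - 1) : (T0 m H).leaves = hL m H ++ cL m H := by
  rw [T0, combine_leaves _ _ (T0_list_length m H hH), T0_flat m H hH]

theorem T0_find (hH : H.card = 2 * 2 ^ m - 1) (x : Fin (5 * 2 ^ m)) : (T0 m H).find? x = some (dp m H x) := by
  by_cases hx : x ∈ H
  · have ht : DTree.leaf x ∈ ((hL m H).map DTree.leaf) ++ [cat (cL m H)] := by
      apply List.mem_append.mpr (Or.inl _)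
      exact List.mem_map_of_mem (by rw [hL, Finset.mem_sort]; exact hx)
    have hfl : (DTree.leaf x).find? x = some 0 := by simp [DTree.find?]
    rw [T0, combine_find? (m+1) _ (T0_list_length m H hH) (T0_flat_nodup m H hH) _ ht x 0 hfl,
      dp, if_pos hx]
  · have hxc : x ∈ cL m H := (mem_cL m H).mpr hx
    have ht : cat (cL m H) ∈ ((hL m H).map DTree.leaf) ++ [cat (cL m H)] := by
      apply List.mem_append.mpr (Or.inr _)
      simp
    have hfc : (cat (cL m H)).find? x
        = some (catD (cL m H).length ((cL m H).idxOf x)) := by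
      rw [cat_find? _ (cL_nodup m H) x hxc]
      rfl
    rw [T0, combine_find? (m+1) _ (T0_list_length m H hH) (T0_flat_nodup m H hH) _ ht x _ hfc,
      dp, if_neg hx]

theorem T0_valid (hH : H.card = 2 * 2 ^ m - 1) : IsValid (T0 m H) (μp m H) := by
  refine ⟨?_, ?_, ?_⟩
  · rw [T0_leaves m H hH]
    have := T0_flat_nodup m H hH
    rwa [T0_flat m H hH] at this
  · intro x
    constructor
    · intro _; exact (μp_pos m H x).ne'
    · intro _
      rw [T0_leaves m H hH, List.mem_append]
      by_cases hx : x ∈ H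
      · exact Or.inl (by rw [hL, Finset.mem_sort]; exact hx)
      · exact Or.inr ((mem_cL m H).mpr hx)
  · intro x _
    rw [T0_find m H hH x, DTree.depth, T0_find m H hH x]
    rfl

theorem T0_cost (hH : H.card = 2 * 2 ^ m - 1) : cost (T0 m H) (μp m H) = ∑ x, μp m H x * (dp m H x : ℝ) := by
  rw [cost]
  refine Finset.sum_congr rfl fun x _ => ?_
  rw [DTree.depth, T0_find m H hH x]
  rfl

end Tree0

/-- the set of achievable costs is bounded below -/
theorem optcost_bddBelow {α : Type} [Fintype α] [DecidableEq α] {μ : α → ℝ}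
    (hμ : ∀ x, 0 ≤ μ x) :
    BddBelow {c | ∃ T : DTree α, IsValid T μ ∧ c = cost T μ} := by
  refine ⟨0, fun c hc => ?_⟩
  obtain ⟨T, _, rfl⟩ := hc
  exact Finset.sum_nonneg fun x _ => mul_nonneg (hμ x) (by positivity)

theorem optCost_le_cost {α : Type} [Fintype α] [DecidableEq α] {μ : α → ℝ}
    (hμ : ∀ x, 0 ≤ μ x) {T : DTree α} (hT : IsValid T μ) : OptCost μ ≤ cost T μ :=
  csInf_le (optcost_bddBelow hμ) ⟨T, hT, rfl⟩

section Root

variable {m : ℕ} {H : Finset (Fin (5 * 2 ^ m))}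

/-- Any tree valid for `μp` of optimal cost splits `μp` in half at the root. -/
theorem root_half (hH : H.card = 2 * 2 ^ m - 1)
    {T : DTree (Fin (5 * 2 ^ m))} (hT : IsValid T (μp m H))
    (hc : cost T (μp m H) ≤ OptCost (μp m H)) :
    ∃ q t f, T = DTree.node q t f ∧ T.questions q ∧ ∑ x ∈ q, μp m H x = 1/2 := by
  have hfind : ∀ x, T.find? x = some (T.depth x) :=
    fun x => hT.finds x (μp_pos m H x).ne'
  -- cost bound
  have hcost2 : cost T (μp m H) ≤ ∑ x, μp m H x * (dp m H x : ℝ) := by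
    calc cost T (μp m H) ≤ OptCost (μp m H) := hc
      _ ≤ cost (T0 m H) (μp m H) :=
          optCost_le_cost (fun x => (μp_pos m H x).le) (T0_valid m H hH)
      _ = _ := T0_cost m H hH
  -- Kraft for T
  have hK : ∑ x, ((2:ℝ)⁻¹) ^ (T.depth x) ≤ 1 := by
    have := DTree.kraft T
    calc ∑ x, ((2:ℝ)⁻¹) ^ (T.depth x) = ∑ x, DTree.wgt (T.find? x) := by
          refine Finset.sum_congr rfl fun x _ => ?_
          rw [hfind x]; rfl
      _ ≤ 1 := this
  -- forced depths
  have hdepth : ∀ x, T.depth x = dp m H x := by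
    apply depth_forced (dp m H) (T.depth) (sum_μp m H hH) hK
    calc ∑ x, ((2:ℝ)⁻¹) ^ dp m H x * (T.depth x : ℝ) = cost T (μp m H) := by
          simp only [cost, μp]
      _ ≤ ∑ x, μp m H x * (dp m H x : ℝ) := hcost2
      _ = _ := by simp only [μp]
  -- T is not a leaf
  obtain ⟨q, t, f, rfl⟩ : ∃ q t f, T = DTree.node q t f := by
    cases T with
    | leaf y =>
        exfalso
        have h5 : 1 < 5 * 2 ^ m := by
          have : 1 ≤ 2 ^ m := Nat.one_le_two_pow
          omega
        obtain ⟨x, hx⟩ : ∃ x : Fin (5 * 2 ^ m), x ≠ y := by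
          refine ⟨if y = ⟨0, by omega⟩ then ⟨1, h5⟩ else ⟨0, by omega⟩, ?_⟩
          split_ifs with h
          · rw [h]; intro hc2; exact absurd (congrArg Fin.val hc2) (by simp)
          · exact fun hc2 => h (hc2 ▸ rfl)
        have := (hT.mem_leaves x).mpr (μp_pos m H x).ne'
        simp [DTree.leaves] at this
        exact hx this
    | node q t f => exact ⟨q, t, f, rfl⟩
  refine ⟨q, t, f, rfl, Set.mem_insert _ _, ?_⟩
  -- both subtree Kraft sums
  have hyes : ∑ x ∈ q, μp m H x ≤ 1/2 := by
    have hkt := DTree.kraft t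
    have hterm : ∀ x ∈ q, 2 * μp m H x ≤ DTree.wgt (t.find? x) := by
      intro x hx
      have := hfind x
      rw [show (DTree.node q t f).find? x
          = (if x ∈ q then t.find? x else f.find? x).map (· + 1) from rfl, if_pos hx] at this
      obtain ⟨a, ha, ha2⟩ := Option.map_eq_some_iff.mp this
      rw [ha]
      have : DTree.wgt (some a) = ((2:ℝ)⁻¹) ^ a := rfl
      rw [this]
      have hd : a + 1 = (DTree.node q t f).depth x := ha2
      have : μp m H x = ((2:ℝ)⁻¹) ^ (a + 1) := by
        rw [μp, ← hdepth x, ← hd]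
      rw [this]
      exact le_of_eq (by rw [pow_succ]; ring)
    have h1 : ∑ x ∈ q, 2 * μp m H x ≤ ∑ x ∈ q, DTree.wgt (t.find? x) :=
      Finset.sum_le_sum hterm
    have h2 : ∑ x ∈ q, DTree.wgt (t.find? x) ≤ ∑ x, DTree.wgt (t.find? x) :=
      Finset.sum_le_sum_of_subset_of_nonneg (Finset.subset_univ q)
        (fun x _ _ => DTree.wgt_nonneg _)
    have h3 : ∑ x ∈ q, 2 * μp m H x = 2 * ∑ x ∈ q, μp m H x := by
      rw [Finset.mul_sum]
    linarith
  have hno : ∑ x ∈ Finset.univ \ q, μp m H x ≤ 1/2 := by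
    have hkf := DTree.kraft f
    have hterm : ∀ x ∈ Finset.univ \ q, 2 * μp m H x ≤ DTree.wgt (f.find? x) := by
      intro x hx
      rw [Finset.mem_sdiff] at hx
      have := hfind x
      rw [show (DTree.node q t f).find? x
          = (if x ∈ q then t.find? x else f.find? x).map (· + 1) from rfl, if_neg hx.2] at this
      obtain ⟨a, ha, ha2⟩ := Option.map_eq_some_iff.mp this
      rw [ha]
      have : DTree.wgt (some a) = ((2:ℝ)⁻¹) ^ a := rfl
      rw [this]
      have hd : a + 1 = (DTree.node q t f).depth x := ha2
      have : μp m H x = ((2:ℝ)⁻¹) ^ (a + 1) := by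
        rw [μp, ← hdepth x, ← hd]
      rw [this]
      exact le_of_eq (by rw [pow_succ]; ring)
    have h1 : ∑ x ∈ Finset.univ \ q, 2 * μp m H x ≤ ∑ x ∈ Finset.univ \ q, DTree.wgt (f.find? x) :=
      Finset.sum_le_sum hterm
    have h2 : ∑ x ∈ Finset.univ \ q, DTree.wgt (f.find? x) ≤ ∑ x, DTree.wgt (f.find? x) :=
      Finset.sum_le_sum_of_subset_of_nonneg (Finset.subset_univ _)
        (fun x _ _ => DTree.wgt_nonneg _)
    have h3 : ∑ x ∈ Finset.univ \ q, 2 * μp m H x = 2 * ∑ x ∈ Finset.univ \ q, μp m H x := by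
      rw [Finset.mul_sum]
    linarith
  have htot : ∑ x ∈ Finset.univ \ q, μp m H x + ∑ x ∈ q, μp m H x = 1 := by
    rw [Finset.sum_sdiff (Finset.subset_univ q), sum_μp m H hH]
  linarith

end Root

end TQ
namespace TQ
open DTree

section Char

variable (m : ℕ) (H : Finset (Fin (5 * 2 ^ m)))

/-- integer weights -/
def iwp (x : Fin (5 * 2 ^ m)) : ℕ := 2 ^ (m + 3 * 2 ^ m + 1 - dp m H x)

theorem dp_mem {x : Fin (5 * 2 ^ m)} (hx : x ∈ H) : dp m H x = m + 1 := by
  rw [dp, if_pos hx]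

theorem dp_notmem (hH : H.card = 2 * 2 ^ m - 1) {x : Fin (5 * 2 ^ m)} (hx : x ∉ H) :
    dp m H x = m + 1 + catD (3 * 2 ^ m + 1) ((cL m H).idxOf x)
      ∧ catD (3 * 2 ^ m + 1) ((cL m H).idxOf x) ≤ 3 * 2 ^ m := by
  have hlen := cL_length m H hH
  have hidx : (cL m H).idxOf x < 3 * 2 ^ m + 1 := by
    rw [← hlen]
    exact List.idxOf_lt_length_iff.mpr ((mem_cL m H).mpr hx)
  constructor
  · rw [dp, if_neg hx, hlen]
  · have := catD_le (len := 3 * 2 ^ m + 1) hidx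
    omega

theorem μp_eq_iwp (hH : H.card = 2 * 2 ^ m - 1) (x : Fin (5 * 2 ^ m)) :
    μp m H x = (iwp m H x : ℝ) * ((2:ℝ)⁻¹) ^ (m + 3 * 2 ^ m + 1) := by
  have hle : dp m H x ≤ m + 3 * 2 ^ m + 1 := by
    by_cases hx : x ∈ H
    · rw [dp_mem m H hx]; omega
    · obtain ⟨h1, h2⟩ := dp_notmem m H hH hx
      omega
  rw [μp, iwp]
  have hcast : ((2 ^ (m + 3 * 2 ^ m + 1 - dp m H x) : ℕ) : ℝ)
      = (2:ℝ) ^ (m + 3 * 2 ^ m + 1 - dp m H x) := by push_cast; ring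
  rw [hcast]
  have hsplit : ((2:ℝ)⁻¹) ^ (m + 3 * 2 ^ m + 1)
      = ((2:ℝ)⁻¹) ^ (m + 3 * 2 ^ m + 1 - dp m H x) * ((2:ℝ)⁻¹) ^ (dp m H x) := by
    rw [← pow_add]
    congr 1
    omega
  rw [hsplit, ← mul_assoc, ← mul_pow]
  norm_num

theorem sum_iwp_rest (hH : H.card = 2 * 2 ^ m - 1) :
    ∑ x ∈ Finset.univ \ H, iwp m H x = 2 ^ (3 * 2 ^ m) := by
  have e1 : ∀ x ∈ Finset.univ \ H, iwp m H x
      = 2 ^ (3 * 2 ^ m - catD ((cL m H).length) ((cL m H).idxOf x)) := by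
    intro x hx
    rw [Finset.mem_sdiff] at hx
    obtain ⟨h1, h2⟩ := dp_notmem m H hH hx.2
    rw [iwp, h1, cL_length m H hH]
    congr 1
    omega
  rw [Finset.sum_congr rfl e1]
  rw [show (cL m H) = ((Finset.univ \ H).sort (· ≤ ·)) from rfl]
  rw [sum_sort_indexOf (Finset.univ \ H)
    (fun i => 2 ^ (3 * 2 ^ m - catD (((Finset.univ \ H).sort (· ≤ ·))).length i))]
  have hlen : (((Finset.univ \ H).sort (· ≤ ·))).length = 3 * 2 ^ m + 1 := cL_length m H hH
  rw [hlen]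
  exact sum_pow_catD (3 * 2 ^ m)

theorem half_char (hH : H.card = 2 * 2 ^ m - 1) {q : Finset (Fin (5 * 2 ^ m))}
    (hq : ∑ x ∈ q, μp m H x = 1 / 2) :
    (q ⊆ H ∧ q.card = 2 ^ m) ∨ (qᶜ ⊆ H ∧ qᶜ.card = 2 ^ m) := by
  have h2m : 1 ≤ 2 ^ m := Nat.one_le_two_pow
  -- integer equation
  have hsum : ∑ x ∈ q, iwp m H x = 2 ^ (m + 3 * 2 ^ m) := by
    have h1 : ((∑ x ∈ q, iwp m H x : ℕ) : ℝ) * ((2:ℝ)⁻¹) ^ (m + 3 * 2 ^ m + 1)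
        = ((2 ^ (m + 3 * 2 ^ m) : ℕ) : ℝ) * ((2:ℝ)⁻¹) ^ (m + 3 * 2 ^ m + 1) := by
      push_cast
      rw [Finset.sum_mul]
      have := Finset.sum_congr rfl (fun x (_ : x ∈ q) => μp_eq_iwp m H hH x)
      rw [← this, hq]
      rw [pow_succ, ← mul_assoc, ← mul_pow]
      norm_num
    have h2 : ((2:ℝ)⁻¹) ^ (m + 3 * 2 ^ m + 1) ≠ 0 := by positivity
    have h3 := mul_right_cancel₀ h2 h1
    exact_mod_cast h3
  have hsplit : ∑ x ∈ q ∩ H, iwp m H x + ∑ x ∈ q \ H, iwp m H x = ∑ x ∈ q, iwp m H x :=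
    Finset.sum_inter_add_sum_sdiff q H _
  have hiwH : ∀ x ∈ q ∩ H, iwp m H x = 2 ^ (3 * 2 ^ m) := by
    intro x hx
    rw [iwp, dp_mem m H (Finset.mem_inter.mp hx).2]
    congr 1
    omega
  have hA : ∑ x ∈ q ∩ H, iwp m H x = (q ∩ H).card * 2 ^ (3 * 2 ^ m) := by
    rw [Finset.sum_congr rfl hiwH, Finset.sum_const, smul_eq_mul]
  have hSle : ∑ x ∈ q \ H, iwp m H x ≤ 2 ^ (3 * 2 ^ m) := by
    rw [← sum_iwp_rest m H hH]
    apply Finset.sum_le_sum_of_subset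
    intro x hx
    rw [Finset.mem_sdiff] at hx ⊢
    exact ⟨Finset.mem_univ x, hx.2⟩
  set A := (q ∩ H).card with hAdef
  set S := ∑ x ∈ q \ H, iwp m H x with hSdef
  set E := 2 ^ (3 * 2 ^ m) with hEdef
  have hE1 : 1 ≤ E := Nat.one_le_two_pow
  have heq : A * E + S = 2 ^ m * E := by
    rw [hA] at hsplit
    rw [hsplit, hsum, hEdef, pow_add]
  have hAle : A ≤ 2 ^ m := by
    have h1 : A * E ≤ 2 ^ m * E := by omega
    exact Nat.le_of_mul_le_mul_right h1 (by omega)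
  have hS : S = (2 ^ m - A) * E := by
    rw [Nat.sub_mul]
    omega
  have hiw1 : ∀ x, 1 ≤ iwp m H x := fun x => Nat.one_le_two_pow
  rcases Nat.lt_or_ge A (2 ^ m) with hcase | hcase
  · -- A < 2^m : S = (2^m - A) E ≥ E, so = E and A = 2^m - 1
    right
    have hBa : 1 ≤ 2 ^ m - A := by omega
    have hSE : S = E ∧ 2 ^ m - A = 1 := by
      constructor
      · have : E ≤ S := by
          calc E = 1 * E := (one_mul E).symm
            _ ≤ (2 ^ m - A) * E := Nat.mul_le_mul_right E hBa
            _ = S := hS.symm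
        omega
      · by_contra hne
        have h2' : 2 ≤ 2 ^ m - A := by omega
        have : 2 * E ≤ S := by
          calc 2 * E ≤ (2 ^ m - A) * E := Nat.mul_le_mul_right E h2'
            _ = S := hS.symm
        omega
    have hfull : Finset.univ \ H ⊆ q \ H := by
      have hsub : q \ H ⊆ Finset.univ \ H := by
        intro x hx
        rw [Finset.mem_sdiff] at hx ⊢
        exact ⟨Finset.mem_univ x, hx.2⟩
      have h0 : ∑ x ∈ (Finset.univ \ H) \ (q \ H), iwp m H x = 0 := by
        have := Finset.sum_sdiff (f := iwp m H) hsub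
        rw [sum_iwp_rest m H hH] at this
        omega
      intro x hx
      by_contra hxq
      have hxmem : x ∈ (Finset.univ \ H) \ (q \ H) := Finset.mem_sdiff.mpr ⟨hx, hxq⟩
      have h1 := Finset.single_le_sum (f := iwp m H)
        (fun y _ => Nat.zero_le _) hxmem
      have := hiw1 x
      omega
    constructor
    · intro x hx
      rw [Finset.mem_compl] at hx
      by_contra hxH
      have : x ∈ Finset.univ \ H := Finset.mem_sdiff.mpr ⟨Finset.mem_univ x, hxH⟩
      have := hfull this
      rw [Finset.mem_sdiff] at this
      exact hx this.1
    · have hqH : q \ H = Finset.univ \ H := by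
        apply Finset.Subset.antisymm _ hfull
        intro x hx
        rw [Finset.mem_sdiff] at hx ⊢
        exact ⟨Finset.mem_univ x, hx.2⟩
      have hcard1 : q.card = A + (q \ H).card := by
        rw [hAdef]
        rw [← Finset.card_inter_add_card_sdiff q H]
      have hcard2 : (q \ H).card = 3 * 2 ^ m + 1 := by
        rw [hqH, Finset.card_sdiff_of_subset (Finset.subset_univ H), hH]
        simp [Finset.card_univ]
        omega
      have hcard3 : qᶜ.card = 5 * 2 ^ m - q.card := by
        rw [Finset.card_compl]
        simp [Fintype.card_fin]
      omega
  · -- A = 2^m : S = 0, q ⊆ H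
    left
    have hAeq : A = 2 ^ m := le_antisymm hAle hcase
    have hS0 : S = 0 := by rw [hS, hAeq]; simp
    have hempty : q \ H = ∅ := by
      by_contra hne
      obtain ⟨x, hx⟩ := Finset.nonempty_iff_ne_empty.mpr hne
      have h1 := Finset.single_le_sum (f := iwp m H) (fun y _ => Nat.zero_le _) hx
      have := hiw1 x
      omega
    have hsub : q ⊆ H := by
      intro x hx
      by_contra hxH
      have : x ∈ q \ H := Finset.mem_sdiff.mpr ⟨hx, hxH⟩
      rw [hempty] at this
      exact absurd this (Finset.notMem_empty x)
    refine ⟨hsub, ?_⟩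
    have hqq : q ∩ H = q := Finset.inter_eq_left.mpr hsub
    have hAq : A = q.card := by rw [hAdef, hqq]
    omega

end Char

/-- For every heavy set `H`, an optimal question set must contain a half-splitter. -/
theorem exists_serving {m : ℕ} {Q : Finset (Finset (Fin (5 * 2 ^ m)))}
    (hQ : AchievesProlixity Q 0) {H : Finset (Fin (5 * 2 ^ m))}
    (hH : H.card = 2 * 2 ^ m - 1) :
    ∃ q ∈ Q, (q ⊆ H ∧ q.card = 2 ^ m) ∨ (qᶜ ⊆ H ∧ qᶜ.card = 2 ^ m) := by
  obtain ⟨T, hvalid, huse, hcost⟩ := hQ (μp m H) (μp_dist m H hH)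
  rw [add_zero] at hcost
  obtain ⟨q, t, f, rfl, hmem, hhalf⟩ := root_half hH hvalid hcost
  exact ⟨q, huse hmem, half_char m H hH hhalf⟩

end TQ
namespace TQ
open DTree

theorem find?_some_depth {α : Type} [DecidableEq α] {T : DTree α} {x : α} {v : ℕ}
    (h : T.find? x = some v) : T.find? x = some (T.depth x) := by
  rw [DTree.depth, h]
  rfl

theorem exists_valid_tree {α : Type} [Fintype α] [DecidableEq α] [Inhabited α] {μ : α → ℝ}
    (hμ : IsDistribution μ) : ∃ T : DTree α, IsValid T μ := by
  classical
  set s := Finset.univ.filter (fun x => μ x ≠ 0) with hs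
  have hs_ne : s.Nonempty := by
    by_contra h
    rw [Finset.not_nonempty_iff_eq_empty] at h
    have hall : ∀ x, μ x = 0 := by
      intro x
      by_contra hx
      have hmem : x ∈ s := by rw [hs]; simp [hx]
      rw [h] at hmem
      exact absurd hmem (Finset.notMem_empty x)
    have h1 : (1:ℝ) = 0 := by
      rw [← hμ.2, Finset.sum_eq_zero (fun x _ => hall x)]
    norm_num at h1
  set l := s.toList with hl
  have hlnd : l.Nodup := Finset.nodup_toList s
  have hlne : l ≠ [] := by
    intro h
    have h2 : s = ∅ := by
      rw [← Finset.toList_eq_nil, ← hl, h]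
    exact Finset.nonempty_iff_ne_empty.mp hs_ne h2
  have hmem : ∀ x, x ∈ l ↔ μ x ≠ 0 := by
    intro x
    rw [hl, Finset.mem_toList, hs]
    simp
  refine ⟨cat l, ?_, ?_, ?_⟩
  · rw [cat_leaves l hlne]
    exact hlnd
  · intro x
    rw [cat_leaves l hlne]
    exact hmem x
  · intro x hx
    have hxl : x ∈ l := (hmem x).mpr hx
    exact find?_some_depth (cat_find? l hlnd x hxl)

theorem exists_optimal_tree {α : Type} [Fintype α] [DecidableEq α] [Inhabited α] {μ : α → ℝ}
    (hμ : IsDistribution μ) : ∃ T : DTree α, IsValid T μ ∧ cost T μ = OptCost μ := by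
  classical
  obtain ⟨T₁, hT₁⟩ := exists_valid_tree hμ
  set c₀ := cost T₁ μ with hc₀
  set Sall := {c | ∃ T : DTree α, IsValid T μ ∧ c = cost T μ} with hSall
  set B := Finset.univ.sup (fun x => ⌈c₀ / μ x⌉₊) with hB
  have hbound : ∀ T : DTree α, IsValid T μ → cost T μ ≤ c₀ →
      ∃ g : α → Fin (B + 1), cost T μ = ∑ x, μ x * ((g x : ℕ) : ℝ) := by
    intro T hT hle
    have hgB : ∀ x, (if μ x = 0 then 0 else T.depth x) ≤ B := by
      intro x
      by_cases hx : μ x = 0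
      · simp [hx]
      · rw [if_neg hx]
        have hpos : 0 < μ x := lt_of_le_of_ne (hμ.1 x) (Ne.symm hx)
        have h1 : μ x * (T.depth x : ℝ) ≤ cost T μ := by
          rw [cost]
          apply Finset.single_le_sum (f := fun x => μ x * (T.depth x : ℝ))
            (fun y _ => mul_nonneg (hμ.1 y) (by positivity)) (Finset.mem_univ x)
        have h2 : (T.depth x : ℝ) ≤ c₀ / μ x := by
          rw [le_div_iff₀ hpos]
          calc (T.depth x : ℝ) * μ x = μ x * T.depth x := by ring
            _ ≤ c₀ := h1.trans hle
        have h3 : (T.depth x : ℝ) ≤ (⌈c₀ / μ x⌉₊ : ℝ) := h2.trans (Nat.le_ceil _)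
        have h4 : T.depth x ≤ ⌈c₀ / μ x⌉₊ := by exact_mod_cast h3
        exact h4.trans (Finset.le_sup (f := fun x => ⌈c₀ / μ x⌉₊) (Finset.mem_univ x))
    refine ⟨fun x => ⟨if μ x = 0 then 0 else T.depth x, Nat.lt_succ_of_le (hgB x)⟩, ?_⟩
    rw [cost]
    refine Finset.sum_congr rfl fun x _ => ?_
    by_cases hx : μ x = 0
    · simp [hx]
    · simp [hx]
  set S' := Sall ∩ Set.Iic c₀ with hS'
  have hc₀mem : c₀ ∈ S' := ⟨⟨T₁, hT₁, rfl⟩, Set.mem_Iic.mpr le_rfl⟩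
  have hfin : S'.Finite := by
    apply Set.Finite.subset (Set.finite_range
      (fun g : α → Fin (B + 1) => ∑ x, μ x * ((g x : ℕ) : ℝ)))
    rintro c ⟨⟨T, hT, rfl⟩, hle⟩
    obtain ⟨g, hg⟩ := hbound T hT hle
    exact ⟨g, hg.symm⟩
  have hmem' : sInf S' ∈ S' := Set.Nonempty.csInf_mem ⟨c₀, hc₀mem⟩ hfin
  have hlb : ∀ c ∈ Sall, sInf S' ≤ c := by
    intro c hc
    rcases le_or_gt c c₀ with h | h
    · exact csInf_le hfin.bddBelow ⟨hc, h⟩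
    · exact (csInf_le hfin.bddBelow hc₀mem).trans h.le
  have hOpt : OptCost μ = sInf S' := by
    apply le_antisymm
    · exact csInf_le (optcost_bddBelow hμ.1) hmem'.1
    · exact le_csInf ⟨c₀, T₁, hT₁, rfl⟩ hlb
  obtain ⟨T, hT, hc⟩ := hmem'.1
  exact ⟨T, hT, by rw [← hc, hOpt]⟩

theorem achieves_univ {n : ℕ} (hn : 0 < n) :
    AchievesProlixity (Finset.univ : Finset (Finset (Fin n))) 0 := by
  intro μ hμ
  have : Inhabited (Fin n) := ⟨⟨0, hn⟩⟩
  obtain ⟨T, hT, hc⟩ := exists_optimal_tree hμ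
  refine ⟨T, hT, ?_, by rw [hc, add_zero]⟩
  rw [UsesQuestions, Finset.coe_univ]
  exact Set.subset_univ _

end TQ
namespace TQ

/-! ### Binomial estimates -/

theorem centralBinom_sq_le : ∀ N : ℕ, (Nat.centralBinom N) ^ 2 * (3 * N + 1) ≤ 16 ^ N := by
  intro N
  induction N with
  | zero => simp [Nat.centralBinom]
  | succ N ih =>
      have key := Nat.succ_mul_centralBinom_succ N
      have h3 : 4 * (2*N+1)^2 * (3*N+4) ≤ 16 * ((N+1)^2 * (3*N+1)) := by nlinarith
      have hpos : 0 < (N+1)^2 * (3*N+1) := by positivity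
      have main : (Nat.centralBinom (N+1)) ^ 2 * (3 * (N+1) + 1) * ((N+1)^2 * (3*N+1))
          ≤ 16 ^ (N+1) * ((N+1)^2 * (3*N+1)) := by
        calc (Nat.centralBinom (N+1)) ^ 2 * (3 * (N+1) + 1) * ((N+1)^2 * (3*N+1))
            = ((N+1) * Nat.centralBinom (N+1))^2 * ((3*N+4) * (3*N+1)) := by ring
          _ = (4 * (2*N+1)^2 * (3*N+4)) * ((Nat.centralBinom N)^2 * (3*N+1)) := by
              rw [key]; ring
          _ ≤ (4 * (2*N+1)^2 * (3*N+4)) * 16 ^ N :=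
              Nat.mul_le_mul_left _ ih
          _ ≤ (16 * ((N+1)^2 * (3*N+1))) * 16 ^ N :=
              Nat.mul_le_mul_right _ h3
          _ = 16 ^ (N+1) * ((N+1)^2 * (3*N+1)) := by rw [pow_succ]; ring
      exact Nat.le_of_mul_le_mul_right main hpos

theorem five_pow_le (N : ℕ) :
    5 ^ (5*N) ≤ (5*N).choose N * 4 ^ (4*N) * (5*N + 1) := by
  set t : ℕ → ℕ := fun k => (5*N).choose k * 4 ^ k with ht
  have hstep : ∀ k, k < 4*N → t k ≤ t (k+1) := by
    intro k hk
    have hrel := Nat.choose_succ_right_eq (5*N) k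
    have h1 : t k * (k+1) ≤ t (k+1) * (k+1) := by
      have e1 : t (k+1) * (k+1) = ((5*N).choose (k+1) * (k+1)) * 4^(k+1) := by
        rw [ht]; ring
      have e2 : t k * (k+1) = (5*N).choose k * (k+1) * 4^k := by rw [ht]; ring
      rw [e1, e2, hrel]
      have h2 : (k+1) ≤ (5*N - k) * 4 := by omega
      calc (5*N).choose k * (k+1) * 4^k ≤ (5*N).choose k * ((5*N - k)*4) * 4^k :=
            Nat.mul_le_mul_right _ (Nat.mul_le_mul_left _ h2)
        _ = (5*N).choose k * (5*N - k) * 4^(k+1) := by rw [pow_succ]; ring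
    exact Nat.le_of_mul_le_mul_right h1 (by omega)
  have hstep' : ∀ k, 4*N ≤ k → t (k+1) ≤ t k := by
    intro k hk
    have hrel := Nat.choose_succ_right_eq (5*N) k
    have h1 : t (k+1) * (k+1) ≤ t k * (k+1) := by
      have e1 : t (k+1) * (k+1) = ((5*N).choose (k+1) * (k+1)) * 4^(k+1) := by
        rw [ht]; ring
      have e2 : t k * (k+1) = (5*N).choose k * (k+1) * 4^k := by rw [ht]; ring
      rw [e1, e2, hrel]
      have h2 : (5*N - k) * 4 ≤ (k+1) := by omega
      calc (5*N).choose k * (5*N - k) * 4^(k+1)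
          = (5*N).choose k * ((5*N - k) * 4) * 4^k := by rw [pow_succ]; ring
        _ ≤ (5*N).choose k * (k+1) * 4^k :=
            Nat.mul_le_mul_right _ (Nat.mul_le_mul_left _ h2)
    exact Nat.le_of_mul_le_mul_right h1 (by omega)
  have hmax : ∀ k, t k ≤ t (4*N) := by
    have hup : ∀ j, j ≤ 4*N → t (4*N - j) ≤ t (4*N) := by
      intro j
      induction j with
      | zero => intro _; simp
      | succ j ihj =>
          intro hj
          have h1 : 4*N - (j+1) < 4*N := by omega
          have h2 : (4*N - (j+1)) + 1 = 4*N - j := by omega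
          calc t (4*N - (j+1)) ≤ t ((4*N - (j+1)) + 1) := hstep _ h1
            _ = t (4*N - j) := by rw [h2]
            _ ≤ t (4*N) := ihj (by omega)
    have hdown : ∀ j, t (4*N + j) ≤ t (4*N) := by
      intro j
      induction j with
      | zero => simp
      | succ j ihj =>
          have h2 : 4*N + (j+1) = (4*N + j) + 1 := by omega
          rw [h2]
          exact (hstep' _ (by omega)).trans ihj
    intro k
    rcases le_or_gt k (4*N) with h | h
    · have h2 : k = 4*N - (4*N - k) := by omega
      rw [h2]
      exact hup _ (by omega)
    · have h2 : k = 4*N + (k - 4*N) := by omega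
      rw [h2]
      exact hdown _
  have hbinom : 5 ^ (5*N) = ∑ k ∈ Finset.range (5*N+1), t k := by
    have h := add_pow (4:ℕ) 1 (5*N)
    norm_num at h
    rw [show (5:ℕ) = 4 + 1 by norm_num, h]
    refine Finset.sum_congr rfl fun k _ => ?_
    rw [ht]
    ring
  have hsum : ∑ k ∈ Finset.range (5*N+1), t k ≤ (5*N+1) * t (4*N) := by
    calc ∑ k ∈ Finset.range (5*N+1), t k ≤ ∑ _k ∈ Finset.range (5*N+1), t (4*N) :=
          Finset.sum_le_sum fun k _ => hmax k
      _ = (5*N+1) * t (4*N) := by rw [Finset.sum_const, Finset.card_range, smul_eq_mul]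
  have hsym : (5*N).choose (4*N) = (5*N).choose N := by
    have : (5*N) - N = 4*N := by omega
    rw [← this, Nat.choose_symm (by omega)]
  calc 5 ^ (5*N) = ∑ k ∈ Finset.range (5*N+1), t k := hbinom
    _ ≤ (5*N+1) * t (4*N) := hsum
    _ = (5*N).choose N * 4 ^ (4*N) * (5*N + 1) := by rw [ht]; simp only; rw [hsym]; ring

/-! ### Counting -/

theorem card_filter_superset {n k : ℕ} (S : Finset (Fin n)) (hSk : S.card ≤ k)
    (hkn : k ≤ n) :
    ((Finset.powersetCard k (Finset.univ : Finset (Fin n))).filter (fun H => S ⊆ H)).card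
      = (n - S.card).choose (k - S.card) := by
  have hcompl : (Finset.univ \ S).card = n - S.card := by
    rw [Finset.card_sdiff_of_subset (Finset.subset_univ S)]
    simp
  rw [← hcompl, ← Finset.card_powersetCard (k - S.card) (Finset.univ \ S)]
  apply Finset.card_bij (fun H _ => H \ S)
  · intro H hH
    rw [Finset.mem_filter, Finset.mem_powersetCard] at hH
    obtain ⟨⟨_, hcard⟩, hsub⟩ := hH
    rw [Finset.mem_powersetCard]
    constructor
    · intro x hx
      rw [Finset.mem_sdiff] at hx ⊢
      exact ⟨Finset.mem_univ x, hx.2⟩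
    · rw [Finset.card_sdiff_of_subset hsub, hcard]
  · intro H₁ h₁ H₂ h₂ heq
    rw [Finset.mem_filter] at h₁ h₂
    rw [← Finset.sdiff_union_of_subset h₁.2, ← Finset.sdiff_union_of_subset h₂.2, heq]
  · intro P hP
    rw [Finset.mem_powersetCard] at hP
    obtain ⟨hPsub, hPcard⟩ := hP
    have hdisj : Disjoint P S := by
      rw [Finset.disjoint_left]
      intro x hx
      have := hPsub hx
      rw [Finset.mem_sdiff] at this
      exact this.2
    refine ⟨P ∪ S, ?_, ?_⟩
    · rw [Finset.mem_filter, Finset.mem_powersetCard]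
      refine ⟨⟨Finset.subset_univ _, ?_⟩, Finset.subset_union_right⟩
      rw [Finset.card_union_of_disjoint hdisj, hPcard]
      omega
    · rw [Finset.union_sdiff_right, Finset.sdiff_eq_self_iff_disjoint.mpr hdisj]

theorem count_bound {m : ℕ} {Q : Finset (Finset (Fin (5 * 2 ^ m)))}
    (hQ : AchievesProlixity Q 0) :
    (5 * 2 ^ m).choose (2 * 2 ^ m - 1) ≤ (4 * 2 ^ m).choose (2 ^ m - 1) * Q.card := by
  classical
  have h2m : 1 ≤ 2 ^ m := Nat.one_le_two_pow
  set fam := Finset.powersetCard (2 * 2 ^ m - 1) (Finset.univ : Finset (Fin (5 * 2 ^ m)))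
    with hfam
  have hserve : ∀ H ∈ fam, ∃ q, q ∈ Q ∧
      ((q ⊆ H ∧ q.card = 2 ^ m) ∨ (qᶜ ⊆ H ∧ qᶜ.card = 2 ^ m)) := by
    intro H hH
    rw [hfam, Finset.mem_powersetCard] at hH
    obtain ⟨q, hqQ, hs⟩ := exists_serving hQ hH.2
    exact ⟨q, hqQ, hs⟩
  choose! sel hselQ hserves using hserve
  set Sq : Finset (Fin (5 * 2 ^ m)) → Finset (Fin (5 * 2 ^ m)) :=
    fun q => if q.card = 2 ^ m then q else qᶜ with hSq
  have hkey : ∀ H ∈ fam, Sq (sel H) ⊆ H ∧ (Sq (sel H)).card = 2 ^ m := by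
    intro H hH
    rcases hserves H hH with ⟨hsub, hcard⟩ | ⟨hsub, hcard⟩
    · rw [hSq]; simp only [if_pos hcard]; exact ⟨hsub, hcard⟩
    · have hne : (sel H).card ≠ 2 ^ m := by
        intro hc
        have h1 : (sel H)ᶜ.card = 5 * 2 ^ m - (sel H).card := by
          rw [Finset.card_compl]; simp
        omega
      rw [hSq]; simp only [if_neg hne]; exact ⟨hsub, hcard⟩
  have hfiber : ∀ b ∈ fam.image sel,
      (fam.filter (fun H => sel H = b)).card ≤ (4 * 2 ^ m).choose (2 ^ m - 1) := by
    intro b hb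
    obtain ⟨H₀, hH₀, rfl⟩ := Finset.mem_image.mp hb
    have hcardS : (Sq (sel H₀)).card = 2 ^ m := (hkey H₀ hH₀).2
    have hsub : fam.filter (fun H => sel H = sel H₀)
        ⊆ fam.filter (fun H => Sq (sel H₀) ⊆ H) := by
      intro H hh
      rw [Finset.mem_filter] at hh ⊢
      refine ⟨hh.1, ?_⟩
      have h1 := (hkey H hh.1).1
      rw [hh.2] at h1
      exact h1
    refine (Finset.card_le_card hsub).trans ?_
    rw [hfam]
    rw [card_filter_superset (Sq (sel H₀)) (by omega) (by simp [Fintype.card_fin]; omega)]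
    rw [hcardS]
    apply le_of_eq
    congr 1 <;> omega
  have hmain := Finset.card_le_mul_card_image (f := sel) fam
    ((4 * 2 ^ m).choose (2 ^ m - 1)) hfiber
  have himg : (fam.image sel).card ≤ Q.card := by
    apply Finset.card_le_card
    intro q hq
    obtain ⟨H, hH, rfl⟩ := Finset.mem_image.mp hq
    exact hselQ H hH
  have hfamcard : fam.card = (5 * 2 ^ m).choose (2 * 2 ^ m - 1) := by
    rw [hfam, Finset.card_powersetCard]
    congr 1
    simp [Fintype.card_fin]
  calc (5 * 2 ^ m).choose (2 * 2 ^ m - 1) = fam.card := hfamcard.symm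
    _ ≤ (4 * 2 ^ m).choose (2 ^ m - 1) * (fam.image sel).card := hmain
    _ ≤ (4 * 2 ^ m).choose (2 ^ m - 1) * Q.card := Nat.mul_le_mul_left _ himg

end TQ
namespace TQ

theorem two_mul_choose_pred (K : ℕ) :
    2 * (2*(K+1)-1).choose (K+1) = Nat.centralBinom (K+1) := by
  have hcb : Nat.centralBinom (K+1) = (2*(K+1)).choose (K+1) := rfl
  rw [hcb]
  have e1 : 2*(K+1) = (2*K+1) + 1 := by omega
  have e2 : 2*(K+1) - 1 = 2*K+1 := by omega
  rw [e2]
  conv_rhs => rw [e1, Nat.choose_succ_succ]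
  simp only [Nat.succ_eq_add_one]
  have e3 : (2*K+1).choose K = (2*K+1).choose (K+1) := by
    have h := Nat.choose_symm (show K+1 ≤ 2*K+1 by omega)
    rwa [show 2*K+1 - (K+1) = K by omega] at h
  omega

theorem final_bound {m : ℕ} {Q : Finset (Finset (Fin (5 * 2 ^ m)))}
    (hQ : AchievesProlixity Q 0) :
    (1.25 : ℝ) ^ (5 * 2 ^ m) / (2 * Real.sqrt ((5 * 2 ^ m : ℕ) : ℝ)) ≤ (Q.card : ℝ) := by
  have h2m : 1 ≤ 2 ^ m := Nat.one_le_two_pow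
  -- ℕ facts
  have hc2pos : 0 < (4*2^m).choose (2^m-1) := Nat.choose_pos (by omega)
  have hcount : (5*2^m).choose (2*2^m - 1) ≤ (4*2^m).choose (2^m-1) * Q.card := count_bound hQ
  have hid : (5*2^m).choose (2*2^m-1) * (2*2^m-1).choose (2^m)
      = (5*2^m).choose (2^m) * (4*2^m).choose (2^m-1) := by
    have h := Nat.choose_mul (n := 5*2^m) (k := 2*2^m-1) (s := 2^m) (by omega)
    rw [h]
    congr 2 <;> omega
  have hA : (5*2^m).choose (2^m) ≤ (2*2^m-1).choose (2^m) * Q.card := by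
    have h3 : (5*2^m).choose (2^m) * (4*2^m).choose (2^m-1)
        ≤ ((2*2^m-1).choose (2^m) * Q.card) * (4*2^m).choose (2^m-1) := by
      calc (5*2^m).choose (2^m) * (4*2^m).choose (2^m-1)
          = (5*2^m).choose (2*2^m-1) * (2*2^m-1).choose (2^m) := hid.symm
        _ ≤ ((4*2^m).choose (2^m-1) * Q.card) * (2*2^m-1).choose (2^m) :=
            Nat.mul_le_mul_right _ hcount
        _ = ((2*2^m-1).choose (2^m) * Q.card) * (4*2^m).choose (2^m-1) := by ring
    exact Nat.le_of_mul_le_mul_right h3 hc2pos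
  have hdouble : 2 * (2*2^m-1).choose (2^m) = Nat.centralBinom (2^m) := by
    obtain ⟨K, hK⟩ : ∃ K, 2^m = K + 1 := ⟨2^m - 1, by omega⟩
    rw [hK]
    exact two_mul_choose_pred K
  have hsq := centralBinom_sq_le (2^m)
  have hfive := five_pow_le (2^m)
  -- ℝ setup
  set s1 := Real.sqrt (3*((2^m : ℕ):ℝ)+1) with hs1
  set s2 := Real.sqrt ((5 * 2 ^ m : ℕ) : ℝ) with hs2
  have hNr : (1:ℝ) ≤ ((2^m : ℕ):ℝ) := by exact_mod_cast h2m
  have hs1pos : 0 < s1 := Real.sqrt_pos.mpr (by nlinarith)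
  have hs2pos : 0 < s2 := by
    rw [hs2]
    apply Real.sqrt_pos.mpr
    have : (0:ℕ) < 5 * 2^m := by omega
    exact_mod_cast this
  have hs1sq : s1^2 = 3*((2^m : ℕ):ℝ)+1 := Real.sq_sqrt (by nlinarith)
  have hs2sq : s2^2 = 5*((2^m : ℕ):ℝ) := by
    rw [hs2, Real.sq_sqrt (by positivity)]
    push_cast
    ring
  have hB : (Nat.centralBinom (2^m) : ℝ) * s1 ≤ 4^(2^m) := by
    have hsq' : ((Nat.centralBinom (2^m) : ℝ))^2 * (3*((2^m : ℕ):ℝ)+1) ≤ 16^(2^m) := by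
      exact_mod_cast hsq
    have h1 : ((Nat.centralBinom (2^m) : ℝ) * s1)^2 ≤ ((4:ℝ)^(2^m))^2 := by
      calc ((Nat.centralBinom (2^m) : ℝ) * s1)^2
          = ((Nat.centralBinom (2^m) : ℝ))^2 * s1^2 := by ring
        _ = ((Nat.centralBinom (2^m) : ℝ))^2 * (3*((2^m : ℕ):ℝ)+1) := by rw [hs1sq]
        _ ≤ 16^(2^m) := hsq'
        _ = ((4:ℝ)^(2^m))^2 := by
            rw [← pow_mul, show (16:ℝ) = 4^2 by norm_num, ← pow_mul]
            ring_nf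
    have hnn : 0 ≤ (Nat.centralBinom (2^m) : ℝ) * s1 := by positivity
    calc (Nat.centralBinom (2^m) : ℝ) * s1
        = Real.sqrt (((Nat.centralBinom (2^m) : ℝ) * s1)^2) := (Real.sqrt_sq hnn).symm
      _ ≤ Real.sqrt (((4:ℝ)^(2^m))^2) := Real.sqrt_le_sqrt h1
      _ = 4^(2^m) := Real.sqrt_sq (by positivity)
  have hD : 5*((2^m : ℕ):ℝ) + 1 ≤ 4 * s2 * s1 := by
    have h1 : (5*((2^m : ℕ):ℝ) + 1)^2 ≤ (4 * s2 * s1)^2 := by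
      have e : (4*s2*s1)^2 = 16 * (s2^2) * (s1^2) := by ring
      rw [e, hs2sq, hs1sq]
      nlinarith
    have hnn : 0 ≤ 5*((2^m : ℕ):ℝ) + 1 := by nlinarith
    calc 5*((2^m : ℕ):ℝ) + 1 = Real.sqrt ((5*((2^m : ℕ):ℝ)+1)^2) := (Real.sqrt_sq hnn).symm
      _ ≤ Real.sqrt ((4 * s2 * s1)^2) := Real.sqrt_le_sqrt h1
      _ = 4 * s2 * s1 := Real.sqrt_sq (by positivity)
  -- cast the ℕ inequalities
  have hAreal : ((5*2^m).choose (2^m) : ℝ) ≤ ((2*2^m-1).choose (2^m) : ℝ) * Q.card := by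
    exact_mod_cast hA
  have hfive' : (5:ℝ)^(5*2^m)
      ≤ ((5*2^m).choose (2^m) : ℝ) * 4^(4*2^m) * (5*((2^m : ℕ):ℝ) + 1) := by
    have hcast : ((5 ^ (5*2^m) : ℕ) : ℝ)
        ≤ (((5*2^m).choose (2^m) * 4 ^ (4*2^m) * (5*2^m + 1) : ℕ) : ℝ) := by
      exact_mod_cast hfive
    push_cast at hcast
    convert hcast using 2
    push_cast
    ring
  have hc4 : ((2*2^m-1).choose (2^m) : ℝ) * (2*s1) ≤ 4^(2^m) := by
    have hdr : (2:ℝ) * ((2*2^m-1).choose (2^m) : ℝ) = (Nat.centralBinom (2^m) : ℝ) := by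
      exact_mod_cast hdouble
    calc ((2*2^m-1).choose (2^m) : ℝ) * (2*s1)
        = ((2:ℝ) * ((2*2^m-1).choose (2^m) : ℝ)) * s1 := by ring
      _ = (Nat.centralBinom (2^m) : ℝ) * s1 := by rw [hdr]
      _ ≤ 4^(2^m) := hB
  -- main chain
  have hmain : (5:ℝ)^(5*2^m) * (2*s1)
      ≤ (4:ℝ)^(5*2^m) * Q.card * (2*s2) * (2*s1) := by
    have hK0 : (0:ℝ) ≤ (Q.card : ℝ) := Nat.cast_nonneg _
    have hstep1 : (5:ℝ)^(5*2^m)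
        ≤ (((2*2^m-1).choose (2^m) : ℝ) * Q.card) * 4^(4*2^m) * (5*((2^m : ℕ):ℝ) + 1) :=
      hfive'.trans (mul_le_mul_of_nonneg_right
        (mul_le_mul_of_nonneg_right hAreal (by positivity)) (by nlinarith))
    calc (5:ℝ)^(5*2^m) * (2*s1)
        ≤ ((((2*2^m-1).choose (2^m) : ℝ) * Q.card) * 4^(4*2^m) * (5*((2^m : ℕ):ℝ) + 1))
            * (2*s1) := mul_le_mul_of_nonneg_right hstep1 (by positivity)
      _ = (((2*2^m-1).choose (2^m) : ℝ) * (2*s1))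
            * ((Q.card : ℝ) * 4^(4*2^m) * (5*((2^m : ℕ):ℝ) + 1)) := by ring
      _ ≤ (4:ℝ)^(2^m) * ((Q.card : ℝ) * 4^(4*2^m) * (5*((2^m : ℕ):ℝ) + 1)) := by
          apply mul_le_mul_of_nonneg_right hc4 (by positivity)
      _ ≤ (4:ℝ)^(2^m) * ((Q.card : ℝ) * 4^(4*2^m) * (4 * s2 * s1)) := by
          apply mul_le_mul_of_nonneg_left _ (by positivity)
          apply mul_le_mul_of_nonneg_left hD (by positivity)
      _ = (4:ℝ)^(2^m + 4*2^m) * Q.card * (2*s2) * (2*s1) := by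
          rw [pow_add]
          ring
      _ = (4:ℝ)^(5*2^m) * Q.card * (2*s2) * (2*s1) := by
          have : 2^m + 4*2^m = 5*2^m := by omega
          rw [this]
  have hfinal : (5:ℝ)^(5*2^m) ≤ (4:ℝ)^(5*2^m) * Q.card * (2*s2) :=
    le_of_mul_le_mul_right hmain (by positivity)
  -- conclude
  rw [div_le_iff₀ (by positivity : (0:ℝ) < 2 * s2)]
  rw [show (1.25 : ℝ) = 5/4 by norm_num, div_pow]
  rw [div_le_iff₀ (by positivity : (0:ℝ) < (4:ℝ)^(5*2^m))]
  calc (5:ℝ)^(5*2^m) ≤ (4:ℝ)^(5*2^m) * Q.card * (2*s2) := hfinal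
    _ = (Q.card : ℝ) * (2 * s2) * 4^(5*2^m) := by ring

end TQ

open TQ in
/-- For `n = 5·2^m`, every optimal set of questions has size at least `1.25^n/O(√n)`. -/
theorem uOpt_zero_lower_special :
    ∃ C : ℝ, 0 < C ∧ ∀ m : ℕ,
      (1.25 : ℝ) ^ (5 * 2 ^ m) / (C * Real.sqrt ((5 * 2 ^ m : ℕ) : ℝ))
        ≤ (uOpt (5 * 2 ^ m) 0 : ℝ) := by
  refine ⟨2, by norm_num, fun m => ?_⟩
  have hpos : 0 < 5 * 2 ^ m := by
    have : 1 ≤ 2 ^ m := Nat.one_le_two_pow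
    omega
  have hne : {k | ∃ Q : Finset (Finset (Fin (5 * 2 ^ m))),
      Q.card = k ∧ AchievesProlixity Q 0}.Nonempty :=
    ⟨(Finset.univ : Finset (Finset (Fin (5 * 2 ^ m)))).card,
      Finset.univ, rfl, achieves_univ hpos⟩
  have hmem := Nat.sInf_mem hne
  obtain ⟨Q, hQcard, hach⟩ := hmem
  have hfb := final_bound hach
  rw [uOpt]
  rw [hQcard] at hfb
  exact hfb
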